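/- Let (f,b) be an element of ℤ^r ≀ G corresponding to a path: there is a word w in the free group on x₁,…,x_r such that f(g)ᵢ equals the net number of signed crossings of the edge (g, gxᵢ) by the path traced by w in the Cayley graph of G, and b is the endpoint of that path. Define Σ_f(g) = Σᵢ fᵢ(g) − Σᵢ fᵢ(gxᵢ^{-1}). Then Σ_f(e) = 1, Σ_f(b) = −1, and Σ_f(g) = 0 for all g ∉ {e, b}, in the case e ≠ b. (Flow/divergence condition for paths.) -/

import Mathlib

/-- The restricted wreath product `ℤ^r ≀ G`. -/
abbrev WreathZ (r : ℕ) (G : Type*) [Group G] := (G →₀ (Fin r → ℤ)) × G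

noncomputable instance WreathZ.instGroup (r : ℕ) (G : Type*) [Group G] :
    Group (WreathZ r G) where
  mul p q := (p.1 + Finsupp.mapDomain (fun x => p.2 * x) q.1, p.2 * q.2)
  one := (0, 1)
  inv p := (- Finsupp.mapDomain (fun x => p.2⁻¹ * x) p.1, p.2⁻¹)
  mul_assoc p q s := by
    refine Prod.ext ?_ (mul_assoc _ _ _)
    show (p.1 + Finsupp.mapDomain (fun x => p.2 * x) q.1)
        + Finsupp.mapDomain (fun x => p.2 * q.2 * x) s.1
      = p.1 + Finsupp.mapDomain (fun x => p.2 * x)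
          (q.1 + Finsupp.mapDomain (fun x => q.2 * x) s.1)
    rw [Finsupp.mapDomain_add, add_assoc]
    congr 1
    have : (fun x => p.2 * q.2 * x) = (fun x => p.2 * x) ∘ (fun x => q.2 * x) := by
      funext x; simp [mul_assoc]
    rw [this, Finsupp.mapDomain_comp]
  one_mul p := by
    refine Prod.ext ?_ (one_mul _)
    show (0 : G →₀ (Fin r → ℤ)) + Finsupp.mapDomain (fun x => (1:G) * x) p.1 = p.1
    have : (fun x : G => (1:G) * x) = id := by funext x; simp
    rw [this, Finsupp.mapDomain_id, zero_add]
  mul_one p := by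
    refine Prod.ext ?_ (mul_one _)
    show p.1 + Finsupp.mapDomain (fun x => p.2 * x) 0 = p.1
    simp
  inv_mul_cancel p := by
    refine Prod.ext ?_ (inv_mul_cancel _)
    show (- Finsupp.mapDomain (fun x => p.2⁻¹ * x) p.1)
        + Finsupp.mapDomain (fun x => p.2⁻¹ * x) p.1 = 0
    simp

/-- The homomorphism `F → ℤ^r ≀ G` recording, for a word `w`, the signed net
crossings of each edge `(g, g·xᵢ)` of the Cayley graph of `G` by the path that
`w` traces out, together with the path's endpoint. The generator `xᵢ` maps to
the function supported at `e` with value the `i`-th basis vector, paired with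
`xᵢ`'s image in `G`. -/
noncomputable def flowHom {G : Type*} [Group G] (r : ℕ) (x : Fin r → G) :
    FreeGroup (Fin r) →* WreathZ r G :=
  FreeGroup.lift (fun i => ((Finsupp.single (1 : G) (Pi.single i (1 : ℤ))), x i))

section Aux

open Classical in
/-- The divergence `Σ_f(g)`. -/
noncomputable def Dv {G : Type*} [Group G] {r : ℕ} (x : Fin r → G)
    (f : G →₀ (Fin r → ℤ)) (g : G) : ℤ :=
  ∑ i : Fin r, f g i - ∑ i : Fin r, f (g * (x i)⁻¹) i

variable {G : Type*} [Group G] {r : ℕ}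

lemma Dv_add (x : Fin r → G) (f₁ f₂ : G →₀ (Fin r → ℤ)) (g : G) :
    Dv x (f₁ + f₂) g = Dv x f₁ g + Dv x f₂ g := by
  simp only [Dv, Finsupp.add_apply, Pi.add_apply, Finset.sum_add_distrib]
  ring

lemma Dv_neg (x : Fin r → G) (f : G →₀ (Fin r → ℤ)) (g : G) :
    Dv x (-f) g = - Dv x f g := by
  simp only [Dv, Finsupp.neg_apply, Pi.neg_apply, Finset.sum_neg_distrib]
  ring

lemma mapDomain_mul_apply (a : G) (f : G →₀ (Fin r → ℤ)) (g : G) :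
    (Finsupp.mapDomain (fun y => a * y) f) g = f (a⁻¹ * g) := by
  conv_lhs => rw [show g = a * (a⁻¹ * g) by group]
  exact Finsupp.mapDomain_apply (mul_right_injective a) f _

lemma Dv_shift (x : Fin r → G) (a : G) (f : G →₀ (Fin r → ℤ)) (g : G) :
    Dv x (Finsupp.mapDomain (fun y => a * y) f) g = Dv x f (a⁻¹ * g) := by
  simp [Dv, mapDomain_mul_apply, mul_assoc]

open Classical in
lemma Dv_single (x : Fin r → G) (a : G) (i : Fin r) (g : G) :
    Dv x (Finsupp.single a (Pi.single i (1 : ℤ))) g =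
      (if g = a then 1 else 0) - (if g = a * x i then 1 else 0) := by
  simp only [Dv, Finsupp.single_apply]
  have h1 : ∑ j : Fin r, (if a = g then Pi.single i (1:ℤ) else 0) j
      = if g = a then 1 else 0 := by
    by_cases h : a = g <;> simp [h, eq_comm]
  have h2 : ∑ j : Fin r, (if a = g * (x j)⁻¹ then Pi.single i (1:ℤ) else 0) j
      = if g = a * x i then 1 else 0 := by
    rw [Finset.sum_eq_single i]
    · by_cases h : a = g * (x i)⁻¹
      · have hg : g = a * x i := by rw [h]; group
        rw [if_pos h, if_pos hg]; simp
      · have hg : ¬ g = a * x i := fun hgg => h (by rw [hgg]; group)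
        rw [if_neg h, if_neg hg]; simp
    · intro j _ hj
      split <;> simp [Pi.single_apply, hj]
    · simp
  rw [h1, h2]

open Classical in
lemma Dv_flowHom (x : Fin r → G) (w : FreeGroup (Fin r)) (g : G) :
    Dv x (flowHom r x w).1 g =
      (if g = 1 then 1 else 0) - (if g = (flowHom r x w).2 then 1 else 0) := by
  induction w using FreeGroup.induction_on generalizing g with
  | C1 =>
    have h1 : (flowHom r x 1) = (1 : WreathZ r G) := map_one _
    rw [h1]
    have : ((1 : WreathZ r G)).1 = (0 : G →₀ (Fin r → ℤ)) := rfl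
    have hb : ((1 : WreathZ r G)).2 = (1 : G) := rfl
    rw [this, hb]
    simp [Dv]
  | of i =>
    have hpure : (pure i : FreeGroup (Fin r)) = FreeGroup.of i := rfl
    have h : flowHom r x (FreeGroup.of i)
        = ((Finsupp.single (1 : G) (Pi.single i (1 : ℤ))), x i) := by
      simp [flowHom]
    rw [h, Dv_single, one_mul]
  | inv_of i _ =>
    have hpure : (pure i : FreeGroup (Fin r)) = FreeGroup.of i := rfl
    have h : flowHom r x (FreeGroup.of i)⁻¹
        = (flowHom r x (FreeGroup.of i))⁻¹ := map_inv _ _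
    have h2 : flowHom r x (FreeGroup.of i)
        = ((Finsupp.single (1 : G) (Pi.single i (1 : ℤ))), x i) := by
      simp [flowHom]
    rw [h, h2]
    show Dv x (- Finsupp.mapDomain (fun y => (x i)⁻¹ * y)
        (Finsupp.single (1 : G) (Pi.single i (1 : ℤ)))) g
      = (if g = 1 then 1 else 0) - (if g = (x i)⁻¹ then 1 else 0)
    rw [Dv_neg, Dv_shift, Dv_single]
    have e1 : (((x i)⁻¹)⁻¹ * g = 1) ↔ g = (x i)⁻¹ := by
      rw [inv_inv]
      constructor
      · intro h3
        calc g = (x i)⁻¹ * (x i * g) := by group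
          _ = (x i)⁻¹ := by rw [h3, mul_one]
      · intro h3; rw [h3]; group
    have e2 : (((x i)⁻¹)⁻¹ * g = 1 * x i) ↔ g = 1 := by
      rw [inv_inv, one_mul]
      constructor
      · intro h3
        have : x i * g = x i * 1 := by rw [h3, mul_one]
        exact mul_left_cancel this
      · intro h3; rw [h3, mul_one]
    simp only [e1, e2]
    ring
  | mul u v hu hv =>
    have h1 : (flowHom r x (u * v)).1 = (flowHom r x u).1 + Finsupp.mapDomain
        (fun y => (flowHom r x u).2 * y) (flowHom r x v).1 := by
      rw [MonoidHom.map_mul (flowHom r x) u v]; rfl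
    have h2 : (flowHom r x (u * v)).2 = (flowHom r x u).2 * (flowHom r x v).2 := by
      rw [MonoidHom.map_mul (flowHom r x) u v]; rfl
    rw [h1, Dv_add, Dv_shift, hu, hv, h2]
    set a := (flowHom r x u).2
    set c := (flowHom r x v).2
    have e1 : (a⁻¹ * g = 1) ↔ g = a := by
      constructor
      · intro h3
        have : a * (a⁻¹ * g) = a * 1 := by rw [h3]
        rw [mul_one, ← mul_assoc, mul_inv_cancel, one_mul] at this
        exact this
      · intro h3; rw [h3]; group
    have e2 : (a⁻¹ * g = c) ↔ g = a * c := by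
      constructor
      · intro h3; rw [← h3]; group
      · intro h3; rw [h3]; group
    simp only [e1, e2]
    ring

end Aux

/-- **flow/divergence condition for paths.** Let `(f, b)` be the
element of `ℤ^r ≀ G` corresponding to the path traced in the Cayley graph of
`G` by a word `w`, and let `Σ_f(g) = Σᵢ fᵢ(g) − Σᵢ fᵢ(g xᵢ⁻¹)` be the net
number of departures of the path from the vertex `g`. If `b ≠ e`, then
`Σ_f(e) = 1`, `Σ_f(b) = −1`, and `Σ_f(g) = 0` for all `g ∉ {e, b}`. -/
theorem flow_divergence {G : Type*} [Group G] (r : ℕ) (x : Fin r → G)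
    (w : FreeGroup (Fin r))
    (f : G →₀ (Fin r → ℤ)) (b : G)
    (hfb : flowHom r x w = (f, b)) (hb : b ≠ 1) :
    (∑ i : Fin r, f 1 i - ∑ i : Fin r, f ((x i)⁻¹) i) = 1 ∧
    (∑ i : Fin r, f b i - ∑ i : Fin r, f (b * (x i)⁻¹) i) = -1 ∧
    (∀ g : G, g ≠ 1 → g ≠ b →
      (∑ i : Fin r, f g i - ∑ i : Fin r, f (g * (x i)⁻¹) i) = 0) := by
  classical
  have hf : (flowHom r x w).1 = f := by rw [hfb]
  have hbb : (flowHom r x w).2 = b := by rw [hfb]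
  have key : ∀ g : G, (∑ i : Fin r, f g i - ∑ i : Fin r, f (g * (x i)⁻¹) i)
      = (if g = 1 then 1 else 0) - (if g = b then 1 else 0) := by
    intro g
    have h0 := Dv_flowHom x w g
    rw [hf, hbb] at h0
    have hsimp : Dv x f g
        = ∑ i : Fin r, f g i - ∑ i : Fin r, f (g * (x i)⁻¹) i := rfl
    rw [hsimp] at h0
    convert h0 using 2
  refine ⟨?_, ?_, ?_⟩
  · have h0 := key 1
    simp only [one_mul] at h0
    rw [h0]
    have h1b : (1:G) ≠ b := Ne.symm hb
    simp [h1b]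
  · have h0 := key b
    rw [h0, if_neg hb, if_pos rfl]
    ring
  · intro g hg1 hgb
    have h0 := key g
    rw [h0, if_neg hg1, if_neg hgb]
    ring
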